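/- If there exist eigenvectors v_1,…,v_n ∈ ℂⁿ, with v_i an eigenvector of A_i for each i, such that v_1,…,v_n are linearly dependent, then P(A_1,…,A_n) = 0. -/
import Mathlib


/-- The Kronecker-sum matrix `A` of `A_1, …, A_n`, with rows and columns indexed by
functions `f : Fin n → Fin n`:
`A f g = ∑ i, (A_i)_{f(i), g(i)} * ∏_{j ≠ i} [f j = g j]`. -/
noncomputable def kronSum (n : ℕ) (A : Fin n → Matrix (Fin n) (Fin n) ℂ) :
    Matrix (Fin n → Fin n) (Fin n → Fin n) ℂ :=
  Matrix.of fun f g =>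
    ∑ i : Fin n, A i (f i) (g i) *
      ∏ j ∈ Finset.univ.erase i, (if f j = g j then (1 : ℂ) else 0)

/-- The row vector `w`, indexed by functions `f : Fin n → Fin n`, with `w f = sgn f`
if `f` is a permutation and `w f = 0` otherwise. -/
noncomputable def wRow (n : ℕ) : (Fin n → Fin n) → ℂ := fun f =>
  ∑ π : Equiv.Perm (Fin n), if f = ⇑π then ((Equiv.Perm.sign π : ℤ) : ℂ) else 0

/-- The square matrix `M(A_1, …, A_n)` whose rows are `w, wA, wA², …, wA^{nⁿ-1}`
(rows indexed by functions `Fin n → Fin n` via a bijection with `Fin (nⁿ)`). -/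
noncomputable def Mbig (n : ℕ) (A : Fin n → Matrix (Fin n) (Fin n) ℂ) :
    Matrix (Fin n → Fin n) (Fin n → Fin n) ℂ :=
  Matrix.of fun f g =>
    Matrix.vecMul (wRow n) (kronSum n A ^ ((Fintype.equivFin (Fin n → Fin n)) f : ℕ)) g

/-- `P(A_1, …, A_n) = det M(A_1, …, A_n)`. -/
noncomputable def Pbig (n : ℕ) (A : Fin n → Matrix (Fin n) (Fin n) ℂ) : ℂ :=
  (Mbig n A).det

lemma sum_update_aux {n : ℕ} (i : Fin n) (f : Fin n → Fin n)
    (c : (Fin n → Fin n) → ℂ) :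
    ∑ g : Fin n → Fin n,
      (∏ j ∈ Finset.univ.erase i, (if f j = g j then (1 : ℂ) else 0)) * c g
    = ∑ k : Fin n, c (Function.update f i k) := by
  have h1 : ∀ g : Fin n → Fin n,
      (∏ j ∈ Finset.univ.erase i, (if f j = g j then (1 : ℂ) else 0)) * c g
      = if (∀ j ∈ Finset.univ.erase i, f j = g j) then c g else 0 := by
    intro g
    rw [Finset.prod_boole, boole_mul]
    congr 1
  rw [Finset.sum_congr rfl fun g _ => h1 g, Finset.sum_ite, Finset.sum_const_zero, add_zero]
  have himg : Finset.univ.filter (fun g : Fin n → Fin n => ∀ j ∈ Finset.univ.erase i, f j = g j)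
      = Finset.image (Function.update f i) Finset.univ := by
    ext g
    simp only [Finset.mem_filter, Finset.mem_univ, true_and, Finset.mem_image,
      Finset.mem_erase, and_imp]
    constructor
    · intro h
      refine ⟨g i, ?_⟩
      funext j
      by_cases hj : j = i
      · subst hj; simp
      · rw [Function.update_of_ne hj]
        exact h j hj trivial
    · rintro ⟨k, rfl⟩ j hj _
      rw [Function.update_of_ne hj]
  rw [himg, Finset.sum_image]
  intro a _ b _ h
  have := congrFun h i
  simpa using this

lemma prod_update_aux {n : ℕ} (v : Fin n → Fin n → ℂ) (f : Fin n → Fin n)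
    (i : Fin n) (k : Fin n) :
    (∏ j, v j (Function.update f i k j))
      = v i k * ∏ j ∈ Finset.univ.erase i, v j (f j) := by
  rw [← Finset.mul_prod_erase Finset.univ (fun j => v j (Function.update f i k j))
    (Finset.mem_univ i)]
  rw [Function.update_self]
  congr 1
  refine Finset.prod_congr rfl fun j hj => ?_
  rw [Function.update_of_ne (Finset.ne_of_mem_erase hj)]

lemma kron_eig {n : ℕ} (A : Fin n → Matrix (Fin n) (Fin n) ℂ)
    (v : Fin n → Fin n → ℂ) (μ : Fin n → ℂ)
    (heig : ∀ i, (A i).mulVec (v i) = μ i • v i) :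
    (kronSum n A).mulVec (fun f => ∏ j, v j (f j)) =
      (∑ i, μ i) • (fun f => ∏ j, v j (f j)) := by
  funext f
  simp only [Matrix.mulVec, dotProduct, kronSum, Matrix.of_apply, Pi.smul_apply,
    smul_eq_mul]
  calc ∑ g : Fin n → Fin n, (∑ i : Fin n, A i (f i) (g i) *
          ∏ j ∈ Finset.univ.erase i, (if f j = g j then (1 : ℂ) else 0)) * ∏ j, v j (g j)
      = ∑ i : Fin n, ∑ g : Fin n → Fin n,
          (∏ j ∈ Finset.univ.erase i, (if f j = g j then (1 : ℂ) else 0)) *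
            (A i (f i) (g i) * ∏ j, v j (g j)) := by
        rw [Finset.sum_comm]
        refine Finset.sum_congr rfl fun g _ => ?_
        rw [Finset.sum_mul]
        refine Finset.sum_congr rfl fun i _ => ?_
        ring
    _ = ∑ i : Fin n, μ i * ∏ j, v j (f j) := by
        refine Finset.sum_congr rfl fun i _ => ?_
        rw [sum_update_aux i f (fun g => A i (f i) (g i) * ∏ j, v j (g j))]
        have hA : ∀ k : Fin n, A i (f i) (Function.update f i k i) = A i (f i) k := by
          intro k; rw [Function.update_self]
        calc ∑ k : Fin n, A i (f i) (Function.update f i k i) *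
                ∏ j, v j (Function.update f i k j)
            = ∑ k : Fin n, A i (f i) k * v i k * ∏ j ∈ Finset.univ.erase i, v j (f j) := by
              refine Finset.sum_congr rfl fun k _ => ?_
              rw [hA k, prod_update_aux]
              ring
          _ = ((A i).mulVec (v i) (f i)) * ∏ j ∈ Finset.univ.erase i, v j (f j) := by
              rw [← Finset.sum_mul]; rfl
          _ = μ i * (v i (f i) * ∏ j ∈ Finset.univ.erase i, v j (f j)) := by
              rw [heig i]; simp [mul_assoc]
          _ = μ i * ∏ j, v j (f j) := by
              rw [Finset.mul_prod_erase Finset.univ (fun j => v j (f j)) (Finset.mem_univ i)]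
    _ = (∑ i, μ i) * ∏ j, v j (f j) := by rw [Finset.sum_mul]

lemma kron_eig_pow {n : ℕ} (A : Fin n → Matrix (Fin n) (Fin n) ℂ)
    (u : (Fin n → Fin n) → ℂ) (lam : ℂ)
    (h : (kronSum n A).mulVec u = lam • u) (k : ℕ) :
    (kronSum n A ^ k).mulVec u = (lam ^ k) • u := by
  induction k with
  | zero => simp [Matrix.one_mulVec]
  | succ m ih =>
    rw [pow_succ', pow_succ']
    rw [← Matrix.mulVec_mulVec, ih, Matrix.mulVec_smul, h, smul_smul, mul_comm]

lemma wdot_zero {n : ℕ} (v : Fin n → Fin n → ℂ)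
    (hdep : ¬ LinearIndependent ℂ v) :
    dotProduct (wRow n) (fun f => ∏ j, v j (f j)) = 0 := by
  have h1 : dotProduct (wRow n) (fun f => ∏ j, v j (f j))
      = ∑ π : Equiv.Perm (Fin n), ((Equiv.Perm.sign π : ℤ) : ℂ) * ∏ i, v i (π i) := by
    simp only [dotProduct, wRow, Finset.sum_mul, ite_mul, zero_mul]
    rw [Finset.sum_comm]
    refine Finset.sum_congr rfl fun π _ => ?_
    rw [Finset.sum_ite_eq' Finset.univ (⇑π)
      (fun f => ((Equiv.Perm.sign π : ℤ) : ℂ) * ∏ j, v j (f j))]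
    simp
  have h2 : (∑ π : Equiv.Perm (Fin n), ((Equiv.Perm.sign π : ℤ) : ℂ) * ∏ i, v i (π i))
      = (Matrix.of fun i j => v j i).det := by
    rw [Matrix.det_apply]
    refine Finset.sum_congr rfl fun π _ => ?_
    simp [Matrix.of_apply, Units.smul_def, zsmul_eq_mul]
  rw [h1, h2]
  obtain ⟨c, hsum, i0, hc⟩ := Fintype.not_linearIndependent_iff.mp hdep
  rw [← Matrix.exists_mulVec_eq_zero_iff]
  refine ⟨c, fun h => hc (congrFun h i0), ?_⟩
  funext i
  have := congrFun hsum i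
  simpa [Matrix.mulVec, dotProduct, mul_comm] using this

/-- if `v_i` is an eigenvector of `A_i` for each `i` and `v_1, …, v_n`
are linearly dependent, then `P(A_1, …, A_n) = 0`. -/
theorem stmt2 (n : ℕ) (A : Fin n → Matrix (Fin n) (Fin n) ℂ)
    (v : Fin n → Fin n → ℂ)
    (hv : ∀ i, v i ≠ 0) (heig : ∀ i, ∃ μ : ℂ, (A i).mulVec (v i) = μ • v i)
    (hdep : ¬ LinearIndependent ℂ v) :
    Pbig n A = 0 := by
  classical
  set u : (Fin n → Fin n) → ℂ := fun f => ∏ j, v j (f j) with hu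
  choose μ hμ using heig
  have heigk := kron_eig_pow A u (∑ i, μ i) (kron_eig A v μ hμ)
  have hw := wdot_zero v hdep
  have hu0 : u ≠ 0 := by
    have hx : ∀ i, ∃ x, v i x ≠ 0 := fun i => Function.ne_iff.mp (hv i)
    choose f0 hf0 using hx
    intro h
    have := congrFun h f0
    exact Finset.prod_ne_zero_iff.mpr (fun i _ => hf0 i) this
  have hM : (Mbig n A).mulVec u = 0 := by
    funext f
    have : (Mbig n A).mulVec u f
        = dotProduct (wRow n)
            ((kronSum n A ^ ((Fintype.equivFin (Fin n → Fin n)) f : ℕ)).mulVec u) := by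
      rw [Matrix.dotProduct_mulVec]
      rfl
    rw [this, heigk, dotProduct_smul, hw]
    simp
  exact (Matrix.exists_mulVec_eq_zero_iff).mp ⟨u, hu0, hM⟩
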